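/- Let ℓ ∈ 𝕊 with η¹ < ∞. Then limsup_{ε→0+} ∫_{(0, η^ε]} exp( −ν(η^ε − s) + c(ℓ^ε(η^ε) − ℓ^ε(s)) ) dℓ^ε(s) ≤ ℓ(η), where the integral is the Lebesgue–Stieltjes integral with respect to the continuous nondecreasing function ℓ^ε. -/

import Mathlib

open MeasureTheory Filter

/-- Membership in `𝕊`: a càdlàg nondecreasing function `ℓ : [0,∞) → [0,∞)` with
`ℓ(0) = 0`, extended by `0` to the negative half-line. -/
def MemS (ℓ : ℝ → ℝ) : Prop :=
  (∀ t : ℝ, t ≤ 0 → ℓ t = 0) ∧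
  (∀ t : ℝ, 0 ≤ ℓ t) ∧
  Monotone ℓ ∧
  (∀ t : ℝ, ContinuousWithinAt ℓ (Set.Ici t) t) ∧
  (∀ t : ℝ, ∃ L : ℝ, Tendsto ℓ (nhdsWithin t (Set.Iio t)) (nhds L))

/-- The regularization `ℓ^ε(t) = (1/ε) ∫_t^{t+ε} ℓ(s) ds + ε t`. -/
noncomputable def reg (ℓ : ℝ → ℝ) (ε t : ℝ) : ℝ :=
  (1 / ε) * (∫ s in t..(t + ε), ℓ s) + ε * t

/-- The first passage time `η^ε = inf{t ≥ 0 : ν t − c ℓ^ε(t) > 1}`. -/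
noncomputable def etaEps (ℓ : ℝ → ℝ) (ν c ε : ℝ) : ℝ :=
  sInf {t : ℝ | 0 ≤ t ∧ 1 < ν * t - c * reg ℓ ε t}

/-- The first passage time `η = inf{t ≥ 0 : ν t − c ℓ(t) > 1}`. -/
noncomputable def eta (ℓ : ℝ → ℝ) (ν c : ℝ) : ℝ :=
  sInf {t : ℝ | 0 ≤ t ∧ 1 < ν * t - c * ℓ t}

lemma reg_aux_lb {ℓ : ℝ → ℝ} (hm : Monotone ℓ) {a b : ℝ} (hab : a ≤ b) :
    (b - a) * ℓ a ≤ ∫ s in a..b, ℓ s := by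
  have h := intervalIntegral.integral_mono_on (μ := volume) hab
    (intervalIntegrable_const (c := ℓ a)) hm.intervalIntegrable
    (fun x hx => hm hx.1)
  simpa [intervalIntegral.integral_const, smul_eq_mul] using h

lemma reg_aux_ub {ℓ : ℝ → ℝ} (hm : Monotone ℓ) {a b : ℝ} (hab : a ≤ b) :
    (∫ s in a..b, ℓ s) ≤ (b - a) * ℓ b := by
  have h := intervalIntegral.integral_mono_on (μ := volume) hab
    hm.intervalIntegrable (intervalIntegrable_const (c := ℓ b))
    (fun x hx => hm hx.2)
  simpa [intervalIntegral.integral_const, smul_eq_mul] using h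

lemma continuous_reg {ℓ : ℝ → ℝ} (hm : Monotone ℓ) (ε : ℝ) :
    Continuous (reg ℓ ε) := by
  have hF : Continuous (fun x => ∫ s in (0:ℝ)..x, ℓ s) :=
    intervalIntegral.continuous_primitive (fun a b => hm.intervalIntegrable) 0
  have key : ∀ t : ℝ, (∫ s in t..(t + ε), ℓ s)
      = (∫ s in (0:ℝ)..(t + ε), ℓ s) - ∫ s in (0:ℝ)..t, ℓ s := by
    intro t
    rw [intervalIntegral.integral_interval_sub_left hm.intervalIntegrable
      hm.intervalIntegrable]
  unfold reg
  simp only [key]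
  exact (continuous_const.mul ((hF.comp (continuous_id.add continuous_const)).sub hF)).add
    (continuous_const.mul continuous_id)

/-- `reg ℓ ε t ≤ ℓ (t + ε) + ε * t` for `ε > 0`. -/
lemma reg_le {ℓ : ℝ → ℝ} (hm : Monotone ℓ) {ε : ℝ} (hε : 0 < ε) (t : ℝ) :
    reg ℓ ε t ≤ ℓ (t + ε) + ε * t := by
  have h := reg_aux_ub hm (a := t) (b := t + ε) (by linarith)
  have h2 : (1 / ε) * (∫ s in t..(t + ε), ℓ s) ≤ ℓ (t + ε) := by
    rw [div_mul_eq_mul_div, div_le_iff₀ hε]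
    nlinarith
  unfold reg; linarith

/-- `ℓ t ≤ reg ℓ ε t` for `ε > 0`, `t ≥ 0`. -/
lemma le_reg {ℓ : ℝ → ℝ} (hm : Monotone ℓ) {ε : ℝ} (hε : 0 < ε) {t : ℝ} (ht : 0 ≤ t) :
    ℓ t ≤ reg ℓ ε t := by
  have h := reg_aux_lb hm (a := t) (b := t + ε) (by linarith)
  have h2 : ℓ t ≤ (1 / ε) * (∫ s in t..(t + ε), ℓ s) := by
    rw [div_mul_eq_mul_div, le_div_iff₀ hε]
    nlinarith
  have : 0 ≤ ε * t := mul_nonneg hε.le ht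
  unfold reg; linarith

/-- Monotonicity of the regularization in `ε` (on `t ≥ 0`, for `ε ∈ (0,1]`). -/
lemma reg_le_reg_one {ℓ : ℝ → ℝ} (hm : Monotone ℓ) {ε : ℝ} (hε : 0 < ε) (hε1 : ε ≤ 1)
    {t : ℝ} (ht : 0 ≤ t) : reg ℓ ε t ≤ reg ℓ 1 t := by
  have hA : (∫ s in t..(t + ε), ℓ s) ≤ ε * ℓ (t + ε) := by
    have := reg_aux_ub hm (a := t) (b := t + ε) (by linarith)
    simpa using this
  have hB : (1 - ε) * ℓ (t + ε) ≤ ∫ s in (t + ε)..(t + 1), ℓ s := by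
    have := reg_aux_lb hm (a := t + ε) (b := t + 1) (by linarith)
    have he : t + 1 - (t + ε) = 1 - ε := by ring
    rwa [he] at this
  have hsplit : (∫ s in t..(t + ε), ℓ s) + (∫ s in (t + ε)..(t + 1), ℓ s)
      = ∫ s in t..(t + 1), ℓ s :=
    intervalIntegral.integral_add_adjacent_intervals hm.intervalIntegrable
      hm.intervalIntegrable
  have key : (1 / ε) * (∫ s in t..(t + ε), ℓ s) ≤ ∫ s in t..(t + 1), ℓ s := by
    rw [div_mul_eq_mul_div, div_le_iff₀ hε]
    nlinarith [hA, hB, hsplit, mul_le_mul_of_nonneg_left hA (by linarith : (0:ℝ) ≤ 1 - ε)]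
  unfold reg
  have : ε * t ≤ 1 * t := by nlinarith
  simp only [one_div, inv_one, one_mul] at *
  linarith [key]

theorem limsup_stieltjes_integral_le (ℓ : ℝ → ℝ) (hℓ : MemS ℓ)
    (ν c : ℝ) (hν : 0 < ν) (hc : 0 < c)
    (hfin : {t : ℝ | 0 ≤ t ∧ 1 < ν * t - c * reg ℓ 1 t}.Nonempty)
    (G : ℝ → StieltjesFunction ℝ)
    (hG : ∀ ε ∈ Set.Ioc (0 : ℝ) 1, ∀ t : ℝ, G ε t = reg ℓ ε t) :
    limsup (fun ε =>
        ∫ s in Set.Ioc (0 : ℝ) (etaEps ℓ ν c ε),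
          Real.exp (-(ν * (etaEps ℓ ν c ε - s))
            + c * (reg ℓ ε (etaEps ℓ ν c ε) - reg ℓ ε s)) ∂((G ε).measure))
      (nhdsWithin 0 (Set.Ioi 0)) ≤ ℓ (eta ℓ ν c) := by
  obtain ⟨h0, hpos, hmono, hrc, -⟩ := hℓ
  set S : Set ℝ := {t : ℝ | 0 ≤ t ∧ 1 < ν * t - c * ℓ t} with hSdef
  set I : ℝ → ℝ := fun ε =>
      ∫ s in Set.Ioc (0 : ℝ) (etaEps ℓ ν c ε),
        Real.exp (-(ν * (etaEps ℓ ν c ε - s))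
          + c * (reg ℓ ε (etaEps ℓ ν c ε) - reg ℓ ε s)) ∂((G ε).measure) with hIdef
  -- S is nonempty and bounded below
  obtain ⟨t₀, ht₀0, ht₀⟩ := hfin
  have hS0 : S.Nonempty := by
    refine ⟨t₀, ht₀0, ?_⟩
    have := le_reg hmono one_pos ht₀0
    nlinarith
  have hSbdd : BddBelow S := ⟨0, fun x hx => hx.1⟩
  have hη : eta ℓ ν c = sInf S := rfl
  have hη0 : 0 ≤ sInf S := le_csInf hS0 fun x hx => hx.1
  -- key inequality: ν * η - 1 ≤ c * ℓ η
  have hJ : ν * sInf S - 1 ≤ c * ℓ (sInf S) := by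
    rcases eq_or_lt_of_le hη0 with heq | hηpos
    · rw [← heq, h0 0 (le_refl 0)]; linarith
    · refine le_of_forall_pos_le_add fun εδ hεδ => ?_
      set δ : ℝ := εδ / ν with hδdef
      have hδpos : 0 < δ := div_pos hεδ hν
      set t : ℝ := max 0 (sInf S - δ) with htdef
      have ht0 : 0 ≤ t := le_max_left _ _
      have htlt : t < sInf S := max_lt hηpos (by linarith)
      have htnS : t ∉ S := fun hts => absurd (csInf_le hSbdd hts) (not_le.2 htlt)
      have hft : ν * t - c * ℓ t ≤ 1 := by
        by_contra hcon
        exact htnS ⟨ht0, not_le.1 hcon⟩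
      have hmt : ℓ t ≤ ℓ (sInf S) := hmono htlt.le
      have htge : sInf S - δ ≤ t := le_max_right _ _
      have hνδ : ν * δ = εδ := mul_div_cancel₀ _ hν.ne'
      nlinarith [mul_le_mul_of_nonneg_left hmt hc.le,
        mul_le_mul_of_nonneg_left htge (le_of_lt hν)]
  -- nonnegativity of I
  have hInn : ∀ ε : ℝ, 0 ≤ I ε := fun ε =>
    integral_nonneg fun s => (Real.exp_pos _).le
  have hbdd : IsBoundedUnder (· ≥ ·) (nhdsWithin (0:ℝ) (Set.Ioi 0)) I :=
    isBoundedUnder_of ⟨0, fun ε => hInn ε⟩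
  have hcob : IsCoboundedUnder (· ≤ ·) (nhdsWithin (0:ℝ) (Set.Ioi 0)) I :=
    hbdd.isCoboundedUnder_le
  -- main eventual bound for each t ∈ S
  have hmain : ∀ t ∈ S, limsup I (nhdsWithin (0:ℝ) (Set.Ioi 0)) ≤ (ν * t - 1) / c := by
    intro t htS
    refine limsup_le_of_le hcob ?_
    -- eventually, t is in the ε-passage set
    have htend : Tendsto (fun ε : ℝ => ℓ (t + ε)) (nhdsWithin 0 (Set.Ioi 0)) (nhds (ℓ t)) := by
      have h1 : Tendsto (fun ε : ℝ => t + ε) (nhdsWithin 0 (Set.Ioi 0))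
          (nhdsWithin t (Set.Ici t)) := by
        apply tendsto_nhdsWithin_of_tendsto_nhds_of_eventually_within
        · have : Tendsto (fun ε : ℝ => t + ε) (nhds 0) (nhds (t + 0)) :=
            (continuous_const.add continuous_id).tendsto 0
          simpa using this.mono_left nhdsWithin_le_nhds
        · filter_upwards [self_mem_nhdsWithin] with ε (hε : ε ∈ Set.Ioi 0)
          exact le_add_of_nonneg_right (le_of_lt (Set.mem_Ioi.1 hε))
      exact (hrc t).tendsto.comp h1
    have hδ : (0:ℝ) < ν * t - c * ℓ t - 1 := by have := htS.2; linarith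
    have hsmall : Tendsto (fun ε : ℝ => c * (ℓ (t + ε) - ℓ t) + c * ε * t)
        (nhdsWithin 0 (Set.Ioi 0)) (nhds 0) := by
      have h1 : Tendsto (fun ε : ℝ => c * (ℓ (t + ε) - ℓ t)) (nhdsWithin 0 (Set.Ioi 0))
          (nhds (c * (ℓ t - ℓ t))) := (htend.sub_const _).const_mul c
      have h2 : Tendsto (fun ε : ℝ => c * ε * t) (nhdsWithin 0 (Set.Ioi 0))
          (nhds (c * 0 * t)) := by
        exact ((continuous_const.mul continuous_id).mul continuous_const).tendsto 0
          |>.mono_left nhdsWithin_le_nhds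
      have := h1.add h2
      simpa using this
    have hev1 : ∀ᶠ ε in nhdsWithin (0:ℝ) (Set.Ioi 0),
        c * (ℓ (t + ε) - ℓ t) + c * ε * t < ν * t - c * ℓ t - 1 :=
      hsmall.eventually (gt_mem_nhds hδ)
    have hevIoc : ∀ᶠ ε in nhdsWithin (0:ℝ) (Set.Ioi 0), ε ∈ Set.Ioc (0:ℝ) 1 :=
      Ioc_mem_nhdsGT_of_mem ⟨le_refl 0, one_pos⟩
    filter_upwards [hev1, hevIoc] with ε hε1 hεIoc
    have hεpos : 0 < ε := hεIoc.1
    -- t belongs to the ε-passage set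
    have htSε : t ∈ {x : ℝ | 0 ≤ x ∧ 1 < ν * x - c * reg ℓ ε x} := by
      refine ⟨htS.1, ?_⟩
      have hr := reg_le hmono hεpos t
      nlinarith [mul_le_mul_of_nonneg_left hr hc.le]
    have hSεbdd : BddBelow {x : ℝ | 0 ≤ x ∧ 1 < ν * x - c * reg ℓ ε x} :=
      ⟨0, fun x hx => hx.1⟩
    have hSεne : {x : ℝ | 0 ≤ x ∧ 1 < ν * x - c * reg ℓ ε x}.Nonempty := ⟨t, htSε⟩
    set η' : ℝ := etaEps ℓ ν c ε with hη'def
    have hη't : η' ≤ t := csInf_le hSεbdd htSε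
    have hcont : Continuous (fun x => ν * x - c * reg ℓ ε x) :=
      (continuous_const.mul continuous_id).sub (continuous_const.mul (continuous_reg hmono ε))
    -- η' is in the closure of the passage set, hence 0 ≤ η' and 1 ≤ ν η' - c reg η'
    have hmem : η' ∈ {x : ℝ | 0 ≤ x ∧ 1 ≤ ν * x - c * reg ℓ ε x} := by
      have hcl : η' ∈ closure {x : ℝ | 0 ≤ x ∧ 1 < ν * x - c * reg ℓ ε x} :=
        csInf_mem_closure hSεne hSεbdd
      have hclosed : IsClosed {x : ℝ | 0 ≤ x ∧ 1 ≤ ν * x - c * reg ℓ ε x} := by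
        apply IsClosed.inter
        · exact isClosed_Ici
        · exact isClosed_le continuous_const hcont
      exact hclosed.closure_subset_iff.2
        (fun x hx => ⟨hx.1, le_of_lt hx.2⟩) hcl
    have hη'0 : 0 ≤ η' := hmem.1
    have hub : 1 ≤ ν * η' - c * reg ℓ ε η' := hmem.2
    -- pointwise bound on the integrand
    have hpt : ∀ s ∈ Set.Ioc (0:ℝ) η',
        Real.exp (-(ν * (η' - s)) + c * (reg ℓ ε η' - reg ℓ ε s)) ≤ 1 := by
      intro s hs
      rw [Real.exp_le_one_iff]
      rcases eq_or_lt_of_le hs.2 with heq | hlt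
      · rw [heq]; ring_nf; exact le_refl 0
      · have hs1 : ν * s - c * reg ℓ ε s ≤ 1 := by
          by_contra hcon
          push_neg at hcon
          exact absurd (csInf_le hSεbdd ⟨hs.1.le, hcon⟩) (not_le.2 hlt)
        linarith
    -- the measure of (0, η'] is finite
    have hμIoc : (G ε).measure (Set.Ioc (0:ℝ) η') = ENNReal.ofReal (reg ℓ ε η' - reg ℓ ε 0) := by
      rw [StieltjesFunction.measure_Ioc, hG ε hεIoc, hG ε hεIoc]
    haveI hfinm : IsFiniteMeasure (((G ε).measure).restrict (Set.Ioc (0:ℝ) η')) := by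
      constructor
      rw [Measure.restrict_apply_univ, hμIoc]
      exact ENNReal.ofReal_lt_top
    -- compare with the constant function 1
    have hint : I ε ≤ ((G ε).measure (Set.Ioc (0:ℝ) η')).toReal := by
      have hmono' := integral_mono_of_nonneg
        (μ := ((G ε).measure).restrict (Set.Ioc (0:ℝ) η'))
        (f := fun s => Real.exp (-(ν * (η' - s)) + c * (reg ℓ ε η' - reg ℓ ε s)))
        (g := fun _ => (1:ℝ))
        (ae_of_all _ fun s => (Real.exp_pos _).le)
        (integrable_const 1)
        (by exact (ae_restrict_iff' measurableSet_Ioc).2 (ae_of_all _ hpt))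
      calc I ε ≤ ∫ _ in Set.Ioc (0:ℝ) η', (1:ℝ) ∂((G ε).measure) := hmono'
        _ = ((G ε).measure (Set.Ioc (0:ℝ) η')).toReal := by
            rw [setIntegral_const, smul_eq_mul, mul_one, Measure.real]
    -- compute/bound the right hand side
    have hreg0 : 0 ≤ reg ℓ ε 0 := by
      have := le_reg hmono hεpos (le_refl (0:ℝ))
      rw [h0 0 (le_refl 0)] at this
      exact this
    have hregη'0 : 0 ≤ reg ℓ ε η' := le_trans (hpos η') (le_reg hmono hεpos hη'0)
    have hμle : ((G ε).measure (Set.Ioc (0:ℝ) η')).toReal ≤ reg ℓ ε η' := by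
      rw [hμIoc]
      rw [ENNReal.toReal_ofReal']
      have := le_max_right (reg ℓ ε η' - reg ℓ ε 0) 0
      rcases max_cases (reg ℓ ε η' - reg ℓ ε 0) 0 with ⟨he, -⟩ | ⟨he, -⟩ <;> rw [he] <;> linarith
    rw [le_div_iff₀ hc]
    have h1 : I ε ≤ reg ℓ ε η' := le_trans hint hμle
    nlinarith [mul_le_mul_of_nonneg_left hη't hν.le]
  -- conclude
  set L := limsup I (nhdsWithin (0:ℝ) (Set.Ioi 0)) with hL
  rw [hη]
  have hkey : ∀ u ∈ S, (c * L + 1) / ν ≤ u := by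
    intro u hu
    have h1 := hmain u hu
    rw [div_le_iff₀ hν]
    have h2 : L * c ≤ ν * u - 1 := (le_div_iff₀ hc).1 h1
    linarith
  have h3 : (c * L + 1) / ν ≤ sInf S := le_csInf hS0 hkey
  rw [div_le_iff₀ hν] at h3
  have h4 : c * L ≤ c * ℓ (sInf S) := by nlinarith
  exact (mul_le_mul_iff_right₀ hc).1 h4
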